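/- arXiv:math/0604552 — 3 statements merged into one kernel-verified Lean document; each statement's English description precedes it below -/
import Mathlib

section
/- Let Δ be the adjacency operator on an SH rooted tree Γ and let H_0 be the closed linear span of {Δ^n δ_O : n ≥ 0}, where δ_O is the delta function at the root. Then H_0 equals the subspace of radially symmetric functions in ℓ²(Γ), i.e., functions f such that f(v) depends only on the distance |v| from the root. -/
open Filter Topology NNReal

noncomputable section

/-- For the adjacency operator `Δ` of a spherically homogeneous
rooted tree (bounded branching), the closed linear span of `{Δ^n δ_O : n ≥ 0}`
is exactly the subspace of radially symmetric `ℓ²` functions. -/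
theorem cyclic_space_of_root_eq_radial
    (V : Type*) [DecidableEq V] (G : SimpleGraph V) (O : V) (κ : ℕ → ℕ) (hκpos : ∀ j, 0 < κ j)
    (K : ℕ) (hκK : ∀ j, κ j ≤ K)
    (distO : V → ℕ) (hdist : ∀ v, distO v = G.dist O v) (hconn : G.Connected)
    (hnbrfin : ∀ v : V, {u | G.Adj v u}.Finite)
    (hchild : ∀ v : V, {u | G.Adj v u ∧ distO u = distO v + 1}.ncard = κ (distO v))
    (hparent : ∀ v : V, distO v ≠ 0 → ∃! u : V, G.Adj v u ∧ distO u = distO v - 1)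
    (hadj : ∀ u v : V, G.Adj u v → distO u = distO v + 1 ∨ distO v = distO u + 1)
    (Δ : lp (fun _ : V => ℝ) 2 →L[ℝ] lp (fun _ : V => ℝ) 2)
    (hΔ : ∀ (f : lp (fun _ : V => ℝ) 2) (x : V),
      (Δ f) x = ∑ᶠ y ∈ {y | G.Adj x y}, f y) :
    ((Submodule.span ℝ
        (Set.range fun n : ℕ => (Δ ^ n) (lp.single 2 O (1 : ℝ)))).topologicalClosure
        : Set (lp (fun _ : V => ℝ) 2)) =
      {f : lp (fun _ : V => ℝ) 2 | ∀ u v : V, distO u = distO v → f u = f v} := by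
  classical
  set δO : lp (fun _ : V => ℝ) 2 := lp.single 2 O (1 : ℝ) with hδO
  set Sp : Submodule ℝ (lp (fun _ : V => ℝ) 2) :=
    Submodule.span ℝ (Set.range fun n : ℕ => (Δ ^ n) δO) with hSp
  -- basic distance facts
  have hO0 : ∀ v : V, distO v = 0 ↔ v = O := by
    intro v
    rw [hdist, hconn.dist_eq_zero_iff]
    exact eq_comm
  have hOO : distO O = 0 := (hO0 O).mpr rfl
  -- neighbor finsets
  set Nfin : V → Finset V := fun x => (hnbrfin x).toFinset with hNfin
  have hNmem : ∀ x u : V, u ∈ Nfin x ↔ G.Adj x u := by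
    intro x u; simp [hNfin, Set.Finite.mem_toFinset]
  have hΔ' : ∀ (f : lp (fun _ : V => ℝ) 2) (x : V),
      (Δ f) x = ∑ y ∈ Nfin x, f y := by
    intro f x
    rw [hΔ f x, ← finsum_mem_coe_finset]
    congr 1
    simp [hNfin]
  set Cfin : V → Finset V := fun x => (Nfin x).filter (fun u => distO u = distO x + 1) with hCfin
  set Pfin : V → Finset V := fun x => (Nfin x).filter (fun u => distO x = distO u + 1) with hPfin
  have hsplit : ∀ (g : V → ℝ) (x : V),
      ∑ y ∈ Nfin x, g y = ∑ y ∈ Cfin x, g y + ∑ y ∈ Pfin x, g y := by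
    intro g x
    rw [hCfin, hPfin, ← Finset.sum_filter_add_sum_filter_not (Nfin x)
      (fun u => distO u = distO x + 1) g]
    congr 1
    apply Finset.sum_congr _ (fun _ _ => rfl)
    ext u
    simp only [Finset.mem_filter, hNmem]
    constructor
    · rintro ⟨ha, hne⟩
      refine ⟨ha, ?_⟩
      rcases hadj x u ha with h | h
      · exact h
      · exact absurd h hne
    · rintro ⟨ha, he⟩
      exact ⟨ha, by omega⟩
  have hCcard : ∀ x : V, (Cfin x).card = κ (distO x) := by
    intro x
    have : {u | G.Adj x u ∧ distO u = distO x + 1} = ↑(Cfin x) := by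
      ext u; simp [hCfin, Finset.mem_filter, hNmem, Set.mem_setOf_eq]
    have h2 := hchild x
    rw [this, Set.ncard_coe_finset] at h2
    exact h2
  have hClevel : ∀ x : V, ∀ y ∈ Cfin x, distO y = distO x + 1 := by
    intro x y hy
    simp only [hCfin, Finset.mem_filter] at hy
    exact hy.2
  have hPlevel : ∀ x : V, ∀ y ∈ Pfin x, distO x = distO y + 1 := by
    intro x y hy
    simp only [hPfin, Finset.mem_filter] at hy
    exact hy.2
  have hP0 : ∀ x : V, distO x = 0 → Pfin x = ∅ := by
    intro x hx
    apply Finset.eq_empty_of_forall_notMem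
    intro u hu
    have := hPlevel x u hu
    omega
  have hP1 : ∀ x : V, distO x ≠ 0 → ∃ u : V, Pfin x = {u} := by
    intro x hx
    obtain ⟨u, ⟨hu1, hu2⟩, hu3⟩ := hparent x hx
    refine ⟨u, ?_⟩
    apply Finset.eq_singleton_iff_unique_mem.mpr
    constructor
    · simp only [hPfin, Finset.mem_filter, hNmem]
      exact ⟨hu1, by omega⟩
    · intro y hy
      have h1 := hPlevel x y hy
      simp only [hPfin, Finset.mem_filter, hNmem] at hy
      exact hu3 y ⟨hy.1, by omega⟩
  -- spheres
  have hSfin : ∀ n : ℕ, {v : V | distO v = n}.Finite := by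
    intro n
    induction n with
    | zero =>
      have : {v : V | distO v = 0} = {O} := by
        ext v; simp [hO0]
      rw [this]; exact Set.finite_singleton O
    | succ n ih =>
      apply Set.Finite.subset (Set.Finite.biUnion ih (fun u _ => hnbrfin u))
      intro v hv
      simp only [Set.mem_setOf_eq] at hv
      obtain ⟨u, ⟨hu1, hu2⟩, -⟩ := hparent v (by omega)
      exact Set.mem_biUnion (show distO u = n by omega) hu1.symm
  have hSne : ∀ n : ℕ, ∃ v : V, distO v = n := by
    intro n
    induction n with
    | zero => exact ⟨O, hOO⟩
    | succ n ih =>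
      obtain ⟨v, hv⟩ := ih
      have hne : (Cfin v).Nonempty := by
        rw [← Finset.card_pos, hCcard]
        exact hκpos _
      obtain ⟨u, hu⟩ := hne
      exact ⟨u, by rw [hClevel v u hu, hv]⟩
  set Sfin : ℕ → Finset V := fun n => (hSfin n).toFinset with hSfinD
  have hSmem : ∀ (n : ℕ) (v : V), v ∈ Sfin n ↔ distO v = n := by
    intro n v; simp [hSfinD, Set.Finite.mem_toFinset]
  -- the sphere indicator functions
  set e : ℕ → lp (fun _ : V => ℝ) 2 :=
    fun n => ∑ v ∈ Sfin n, lp.single 2 v (1 : ℝ) with heD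
  have he_apply : ∀ (n : ℕ) (x : V), (e n) x = if distO x = n then 1 else 0 := by
    intro n x
    rw [heD]
    simp only [lp.coeFn_sum, Finset.sum_apply, lp.single_apply, Finset.sum_dite_eq, Pi.single_apply,
      Finset.sum_ite_eq, Finset.sum_ite_eq']
    by_cases hx : distO x = n
    · rw [if_pos ((hSmem n x).mpr hx), if_pos hx]
    · rw [if_neg (fun h => hx ((hSmem n x).mp h)), if_neg hx]
  -- sums of e over children / parents
  have hsumC : ∀ (m : ℕ) (x : V),
      ∑ y ∈ Cfin x, (e m) y = if distO x + 1 = m then (κ (distO x) : ℝ) else 0 := by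
    intro m x
    have : ∀ y ∈ Cfin x, (e m) y = if distO x + 1 = m then (1:ℝ) else 0 := by
      intro y hy
      rw [he_apply, hClevel x y hy]
    rw [Finset.sum_congr rfl this, Finset.sum_const, hCcard]
    by_cases h : distO x + 1 = m <;> simp [h]
  have hsumP : ∀ (m : ℕ) (x : V),
      ∑ y ∈ Pfin x, (e m) y = if distO x = m + 1 then (1:ℝ) else 0 := by
    intro m x
    by_cases hx : distO x = 0
    · rw [hP0 x hx, Finset.sum_empty, if_neg (by omega)]
    · obtain ⟨u, hu⟩ := hP1 x hx
      have hul : distO x = distO u + 1 := hPlevel x u (by rw [hu]; exact Finset.mem_singleton_self u)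
      rw [hu, Finset.sum_singleton, he_apply]
      by_cases h : distO u = m
      · rw [if_pos h, if_pos (by omega)]
      · rw [if_neg h, if_neg (by omega)]
  have hΔapp : ∀ (f : lp (fun _ : V => ℝ) 2) (x : V),
      (Δ f) x = ∑ y ∈ Cfin x, f y + ∑ y ∈ Pfin x, f y := by
    intro f x; rw [hΔ' f x, hsplit]
  -- recurrences
  have hΔe0 : Δ (e 0) = e 1 := by
    apply lp.ext
    funext x
    rw [hΔapp, hsumC, hsumP, he_apply]
    by_cases h : distO x = 1 <;> simp [h]
  have hΔeS : ∀ n : ℕ, Δ (e (n+1)) = (κ n : ℝ) • e n + e (n+2) := by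
    intro n
    apply lp.ext
    funext x
    rw [hΔapp, hsumC, hsumP]
    have hrhs : ((κ n : ℝ) • e n + e (n+2)) x = (κ n : ℝ) * (e n) x + (e (n+2)) x := by
      rfl
    rw [hrhs, he_apply, he_apply]
    by_cases h1 : distO x = n
    · rw [if_pos (show distO x + 1 = n + 1 by omega),
        if_neg (show ¬ distO x = n + 1 + 1 by omega), if_pos h1, h1]
      ring
    · by_cases h2 : distO x = n + 2
      · rw [if_neg (show ¬ distO x + 1 = n + 1 by omega), if_pos h2, if_neg h1]
        ring
      · rw [if_neg (show ¬ distO x + 1 = n + 1 by omega), if_neg h2, if_neg h1]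
        ring
  -- e n lies in the span
  have hδOmem : δO ∈ Sp := by
    apply Submodule.subset_span
    exact ⟨0, by simp⟩
  have hΔSp : ∀ g, g ∈ Sp → Δ g ∈ Sp := by
    intro g hg
    refine Submodule.span_induction ?_ ?_ ?_ ?_ hg
    · rintro x ⟨n, rfl⟩
      apply Submodule.subset_span
      refine ⟨n + 1, ?_⟩
      show (Δ ^ (n + 1)) δO = Δ ((Δ ^ n) δO)
      rw [pow_succ', ContinuousLinearMap.mul_apply]
    · simp only [map_zero]; exact Sp.zero_mem
    · intro x y _ _ hx hy
      rw [map_add]; exact Sp.add_mem hx hy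
    · intro c x _ hx
      rw [map_smul]; exact Sp.smul_mem c hx
  have he0 : e 0 = δO := by
    apply lp.ext
    funext x
    rw [he_apply, hδO]
    by_cases hx : x = O
    · subst hx
      rw [lp.single_apply_self, if_pos hOO]
    · rw [lp.single_apply_ne 2 O 1 hx, if_neg (fun h => hx ((hO0 x).mp h))]
  have hemem : ∀ n : ℕ, e n ∈ Sp := by
    have key : ∀ n : ℕ, e n ∈ Sp ∧ e (n + 1) ∈ Sp := by
      intro n
      induction n with
      | zero =>
        refine ⟨he0 ▸ hδOmem, ?_⟩
        rw [← hΔe0]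
        exact hΔSp _ (he0 ▸ hδOmem)
      | succ n ih =>
        refine ⟨ih.2, ?_⟩
        have : e (n + 2) = Δ (e (n + 1)) - (κ n : ℝ) • e n := by
          rw [hΔeS n]; abel
        rw [this]
        exact Sp.sub_mem (hΔSp _ ih.2) (Sp.smul_mem _ ih.1)
    exact fun n => (key n).1
  -- continuity of evaluation
  have hcont : ∀ u : V, Continuous fun g : lp (fun _ : V => ℝ) 2 => (g : V → ℝ) u := by
    intro u
    have hlip : ∀ f g : lp (fun _ : V => ℝ) 2,
        dist ((f : V → ℝ) u) ((g : V → ℝ) u) ≤ ((1 : ℝ≥0) : ℝ) * dist f g := by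
      intro f g
      rw [NNReal.coe_one, one_mul, dist_eq_norm, dist_eq_norm]
      have h1 : (f : V → ℝ) u - (g : V → ℝ) u = ((f - g : lp (fun _ : V => ℝ) 2) : V → ℝ) u := by
        rw [lp.coeFn_sub]; rfl
      rw [h1]
      exact lp.norm_apply_le_norm (by norm_num) (f - g) u
    exact (LipschitzWith.of_dist_le_mul hlip).continuous
  have hRclosed : IsClosed {f : lp (fun _ : V => ℝ) 2 | ∀ u v : V, distO u = distO v → f u = f v} := by
    have hset : {f : lp (fun _ : V => ℝ) 2 | ∀ u v : V, distO u = distO v → f u = f v}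
        = ⋂ (u : V), ⋂ (v : V), ⋂ (_ : distO u = distO v),
            {f : lp (fun _ : V => ℝ) 2 | (f : V → ℝ) u = f v} := by
      ext f; simp only [Set.mem_iInter, Set.mem_setOf_eq]
    rw [hset]
    exact isClosed_iInter fun u => isClosed_iInter fun v => isClosed_iInter fun _ =>
      isClosed_eq (hcont u) (hcont v)
  -- Δ preserves radiality
  have hΔrad : ∀ g : lp (fun _ : V => ℝ) 2, (∀ u v : V, distO u = distO v → g u = g v) →
      ∀ u v : V, distO u = distO v → (Δ g) u = (Δ g) v := by
    intro g hg u v huv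
    by_cases h0 : distO u = 0
    · have hu : u = O := (hO0 u).mp h0
      have hv : v = O := (hO0 v).mp (by omega)
      rw [hu, hv]
    · rw [hΔapp, hΔapp]
      have hCne : (Cfin u).Nonempty := by
        rw [← Finset.card_pos, hCcard]; exact hκpos _
      obtain ⟨y₀, hy₀⟩ := hCne
      have hy₀l : distO y₀ = distO u + 1 := hClevel u y₀ hy₀
      have key : ∀ w : V, distO w = distO u →
          ∑ y ∈ Cfin w, (g : V → ℝ) y = (κ (distO u) : ℝ) * g y₀ := by
        intro w hw
        have hc : ∀ y ∈ Cfin w, (g : V → ℝ) y = g y₀ := fun y hy =>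
          hg y y₀ (by rw [hClevel w y hy, hw, hy₀l])
        rw [Finset.sum_congr rfl hc, Finset.sum_const, hCcard, hw, nsmul_eq_mul]
      obtain ⟨pu, hpu⟩ := hP1 u h0
      obtain ⟨pv, hpv⟩ := hP1 v (by omega)
      have hpul : distO u = distO pu + 1 :=
        hPlevel u pu (by rw [hpu]; exact Finset.mem_singleton_self pu)
      have hpvl : distO v = distO pv + 1 :=
        hPlevel v pv (by rw [hpv]; exact Finset.mem_singleton_self pv)
      rw [key u rfl, key v huv.symm, hpu, hpv, Finset.sum_singleton, Finset.sum_singleton,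
        hg pu pv (by omega)]
  -- generators are radial
  have hgenrad : ∀ n : ℕ, ∀ u v : V, distO u = distO v →
      (((Δ ^ n) δO : lp (fun _ : V => ℝ) 2) : V → ℝ) u = (((Δ ^ n) δO : lp (fun _ : V => ℝ) 2) : V → ℝ) v := by
    intro n
    induction n with
    | zero =>
      intro u v huv
      simp only [pow_zero, ContinuousLinearMap.one_apply]
      rw [← he0, he_apply, he_apply, huv]
    | succ n ih =>
      have hstep : (Δ ^ (n + 1)) δO = Δ ((Δ ^ n) δO) := by
        rw [pow_succ', ContinuousLinearMap.mul_apply]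
      rw [hstep]
      exact hΔrad _ ih
  -- span consists of radial functions
  have hSpR : (Sp : Set (lp (fun _ : V => ℝ) 2)) ⊆
      {f : lp (fun _ : V => ℝ) 2 | ∀ u v : V, distO u = distO v → f u = f v} := by
    intro g hg
    refine Submodule.span_induction ?_ ?_ ?_ ?_ hg
    · rintro x ⟨n, rfl⟩
      exact hgenrad n
    · intro u v _
      simp [lp.coeFn_zero]
    · intro x y _ _ hx hy u v huv
      have hxy : ((x + y : lp (fun _ : V => ℝ) 2) : V → ℝ) u = x u + y u := by
        rw [lp.coeFn_add]; rfl
      have hxy' : ((x + y : lp (fun _ : V => ℝ) 2) : V → ℝ) v = x v + y v := by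
        rw [lp.coeFn_add]; rfl
      rw [hxy, hxy', hx u v huv, hy u v huv]
    · intro c x _ hx u v huv
      have h1 : ((c • x : lp (fun _ : V => ℝ) 2) : V → ℝ) u = c • x u := by
        rw [lp.coeFn_smul]; rfl
      have h2 : ((c • x : lp (fun _ : V => ℝ) 2) : V → ℝ) v = c • x v := by
        rw [lp.coeFn_smul]; rfl
      rw [h1, h2, hx u v huv]
  -- conclude
  ext f
  simp only [SetLike.mem_coe, Set.mem_setOf_eq]
  constructor
  · intro hf
    have hf' : f ∈ closure (Sp : Set (lp (fun _ : V => ℝ) 2)) := by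
      rw [← Submodule.topologicalClosure_coe]
      exact hf
    exact closure_minimal hSpR hRclosed hf'
  · intro hf
    show f ∈ (Sp.topologicalClosure : Set (lp (fun _ : V => ℝ) 2))
    rw [Submodule.topologicalClosure_coe]
    have hsum := lp.hasSum_single (E := fun _ : V => ℝ) (p := 2) (by norm_num) f
    rw [Metric.mem_closure_iff]
    intro ε hε
    obtain ⟨T₀, hT₀⟩ := Metric.tendsto_atTop.mp hsum ε hε
    set N : ℕ := T₀.sup distO with hN
    set B : Finset V := (Finset.range (N + 1)).biUnion Sfin with hB
    have hTB : T₀ ≤ B := by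
      intro v hv
      rw [hB]
      exact Finset.mem_biUnion.mpr ⟨distO v,
        Finset.mem_range.mpr (Nat.lt_succ_of_le (Finset.le_sup hv)), (hSmem _ v).mpr rfl⟩
    refine ⟨∑ v ∈ B, lp.single 2 v ((f : V → ℝ) v), ?_, ?_⟩
    · show (∑ v ∈ B, lp.single 2 v ((f : V → ℝ) v)) ∈ (Sp : Set (lp (fun _ : V => ℝ) 2))
      rw [hB, Finset.sum_biUnion]
      · apply Submodule.sum_mem
        intro n _
        obtain ⟨w, hw⟩ := hSne n
        have hcollapse : ∑ v ∈ Sfin n, lp.single 2 v ((f : V → ℝ) v) = (f w : ℝ) • e n := by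
          rw [heD, Finset.smul_sum]
          apply Finset.sum_congr rfl
          intro v hv
          have hfv : (f : V → ℝ) v = f w := hf v w (by rw [(hSmem n v).mp hv, hw])
          rw [show ((f : V → ℝ) v) = (f : V → ℝ) w • (1 : ℝ) by
            rw [smul_eq_mul, mul_one, hfv], lp.single_smul]
        rw [hcollapse]
        exact Sp.smul_mem _ (hemem n)
      · intro a _ b _ hab
        apply Finset.disjoint_left.mpr
        intro v hva hvb
        exact hab (by rw [← (hSmem a v).mp hva, (hSmem b v).mp hvb])
    · rw [dist_comm]
      exact hT₀ B hTB

end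
end

section
/- Let Γ be an SH rooted tree with bounded branching and Δ its adjacency operator. If φ ∈ ℓ²(Γ) is supported on the sphere S_Γ(R) and satisfies that for every vertex w ∈ S_Γ(R−1), the sum of φ over the children of w is zero, then every vector Δ^n φ is orthogonal to every radially symmetric function in ℓ²(Γ). -/
open Filter Topology

noncomputable section

/-- If `φ ∈ ℓ²(Γ)` is supported on the sphere of radius `R` of
an SH rooted tree and its sum over the children of each vertex of the sphere of
radius `R-1` vanishes, then every `Δ^n φ` is orthogonal to every radially
symmetric `ℓ²` function. -/
theorem powers_orthogonal_to_radial
    (V : Type*) (G : SimpleGraph V) (O : V)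
    (κ : ℕ → ℕ) (hκpos : ∀ j, 0 < κ j) (K : ℕ) (hκK : ∀ j, κ j ≤ K)
    (distO : V → ℕ) (hdist : ∀ v, distO v = G.dist O v) (hconn : G.Connected)
    (hnbrfin : ∀ v : V, {u | G.Adj v u}.Finite)
    (hchild : ∀ v : V, {u | G.Adj v u ∧ distO u = distO v + 1}.ncard = κ (distO v))
    (hparent : ∀ v : V, distO v ≠ 0 → ∃! u : V, G.Adj v u ∧ distO u = distO v - 1)
    (hadj : ∀ u v : V, G.Adj u v → distO u = distO v + 1 ∨ distO v = distO u + 1)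
    (Δ : lp (fun _ : V => ℝ) 2 →L[ℝ] lp (fun _ : V => ℝ) 2)
    (hΔ : ∀ (f : lp (fun _ : V => ℝ) 2) (x : V),
      (Δ f) x = ∑ᶠ y ∈ {y | G.Adj x y}, f y)
    (R : ℕ) (hR : 1 ≤ R)
    (φ : lp (fun _ : V => ℝ) 2)
    (hsupp : ∀ v : V, distO v ≠ R → φ v = 0)
    (hsum : ∀ w : V, distO w = R - 1 →
      ∑ᶠ v ∈ {v | G.Adj w v ∧ distO v = R}, φ v = 0) :
    ∀ (n : ℕ) (g : lp (fun _ : V => ℝ) 2),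
      (∀ u v : V, distO u = distO v → g u = g v) →
      (inner ℝ ((Δ ^ n) φ) g : ℝ) = 0 := by
  classical
  -- children are finite
  have hchildfin : ∀ v : V, {u | G.Adj v u ∧ distO u = distO v + 1}.Finite :=
    fun v => (hnbrfin v).subset fun u hu => hu.1
  -- spheres are finite
  have hSfin : ∀ r : ℕ, {v : V | distO v = r}.Finite := by
    intro r
    induction r with
    | zero =>
      refine (Set.finite_singleton O).subset fun v hv => ?_
      have : G.dist O v = 0 := by rw [← hdist]; exact hv
      have := (hconn.dist_eq_zero_iff).mp this
      simp [this.symm]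
    | succ r ih =>
      refine (ih.biUnion fun w _ => hchildfin w).subset fun v hv => ?_
      have hv' : distO v = r + 1 := hv
      obtain ⟨u, ⟨hadjvu, hdu⟩, -⟩ := hparent v (by omega)
      rw [hv'] at hdu
      simp only [Nat.add_sub_cancel] at hdu
      exact Set.mem_biUnion (show distO u = r from hdu)
        ⟨hadjvu.symm, by rw [hdu, hv']⟩
  -- Finset versions
  set sF : ℕ → Finset V := fun r => (hSfin r).toFinset with hsF
  set cF : V → Finset V := fun v => (hchildfin v).toFinset with hcF
  have hmemS : ∀ (r : ℕ) (v : V), v ∈ sF r ↔ distO v = r := by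
    intro r v; rw [hsF]; exact (hSfin r).mem_toFinset
  have hmemC : ∀ (v u : V), u ∈ cF v ↔ G.Adj v u ∧ distO u = distO v + 1 := by
    intro v u; simp [hcF, Set.Finite.mem_toFinset]
  have hcardC : ∀ v : V, (cF v).card = κ (distO v) := by
    intro v
    rw [← hchild v, Set.ncard_eq_toFinset_card _ (hchildfin v)]
  -- sphere (r+1) is the disjoint union of children over sphere r
  have hbi : ∀ r : ℕ, sF (r + 1) = (sF r).biUnion cF := by
    intro r
    ext v
    simp only [Finset.mem_biUnion]
    constructor
    · intro hv
      have hv' : distO v = r + 1 := (hmemS _ _).mp hv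
      obtain ⟨u, ⟨hadjvu, hdu⟩, -⟩ := hparent v (by omega)
      rw [hv'] at hdu
      simp only [Nat.add_sub_cancel] at hdu
      exact ⟨u, (hmemS _ _).mpr hdu, (hmemC _ _).mpr ⟨hadjvu.symm, by rw [hdu, hv']⟩⟩
    · rintro ⟨w, hw, hv⟩
      have hw' : distO w = r := (hmemS _ _).mp hw
      have := ((hmemC _ _).mp hv).2
      exact (hmemS _ _).mpr (by omega)
  have hdisj : ∀ r : ℕ, Set.PairwiseDisjoint (↑(sF r)) cF := by
    intro r w1 hw1 w2 hw2 hne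
    simp only [Finset.mem_coe] at hw1 hw2
    refine Finset.disjoint_left.mpr fun v hv1 hv2 => hne ?_
    obtain ⟨ha1, hd1⟩ := (hmemC _ _).mp hv1
    obtain ⟨ha2, hd2⟩ := (hmemC _ _).mp hv2
    have hvne : distO v ≠ 0 := by omega
    have h := hparent v hvne
    have e1 : w1 = h.choose := h.unique ⟨ha1.symm, by omega⟩ h.choose_spec.1
    have e2 : w2 = h.choose := h.unique ⟨ha2.symm, by omega⟩ h.choose_spec.1
    rw [e1, e2]
  -- key summation identity
  have hkey : ∀ (r : ℕ) (F : V → ℝ),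
      ∑ v ∈ sF (r + 1), F v = ∑ w ∈ sF r, ∑ v ∈ cF w, F v := by
    intro r F
    rw [hbi r, Finset.sum_biUnion (hdisj r)]
  -- Δ values as finset sums
  have hΔ' : ∀ (f : lp (fun _ : V => ℝ) 2) (x : V),
      (Δ f) x = ∑ y ∈ (hnbrfin x).toFinset, f y := by
    intro f x
    rw [hΔ f x, finsum_mem_eq_finite_toFinset_sum _ (hnbrfin x)]
  -- neighbors of the root-sphere vertices are exactly children
  have hnbr0 : ∀ x : V, distO x = 0 → (hnbrfin x).toFinset = cF x := by
    intro x hx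
    ext u
    simp only [Set.Finite.mem_toFinset, Set.mem_setOf_eq, hmemC]
    constructor
    · intro h
      rcases hadj x u h with h' | h'
      · omega
      · exact ⟨h, by omega⟩
    · exact fun h => h.1
  -- a global parent function
  let par : V → V := fun x => if h : distO x ≠ 0 then (hparent x h).choose else x
  have hpar : ∀ x : V, distO x ≠ 0 → G.Adj x (par x) ∧ distO (par x) = distO x - 1 := by
    intro x h
    simp only [par, dif_pos h]
    exact (hparent x h).choose_spec.1
  have hparu : ∀ x : V, distO x ≠ 0 → ∀ u : V, G.Adj x u → distO u = distO x - 1 →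
      u = par x := by
    intro x h u h1 h2
    simp only [par, dif_pos h]
    exact (hparent x h).unique ⟨h1, h2⟩ (hparent x h).choose_spec.1
  -- neighbor decomposition for non-root vertices
  have hnbrS : ∀ x : V, distO x ≠ 0 →
      par x ∉ cF x ∧ (hnbrfin x).toFinset = insert (par x) (cF x) := by
    intro x hx
    obtain ⟨hadjp, hdp⟩ := hpar x hx
    constructor
    · intro hmem
      have := ((hmemC _ _).mp hmem).2
      omega
    · ext u
      simp only [Set.Finite.mem_toFinset, Set.mem_setOf_eq, Finset.mem_insert, hmemC]
      constructor
      · intro h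
        rcases hadj x u h with h' | h'
        · left; exact hparu x hx u h (by omega)
        · right; exact ⟨h, by omega⟩
      · rintro (rfl | h)
        · exact hadjp
        · exact h.1
  -- the main invariant: all sphere sums of Δ^n φ vanish
  have main : ∀ n : ℕ, ∀ r : ℕ, ∑ v ∈ sF r, ((Δ ^ n) φ : lp (fun _ : V => ℝ) 2) v = 0 := by
    intro n
    induction n with
    | zero =>
      intro r
      simp only [pow_zero, ContinuousLinearMap.one_apply]
      by_cases hr : r = R
      · obtain ⟨R', hR'⟩ : ∃ R', r = R' + 1 := ⟨R - 1, by omega⟩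
        subst hR'
        rw [hkey R' (fun v => φ v)]
        refine Finset.sum_eq_zero fun w hw => ?_
        have hw' : distO w = R' := (hmemS _ _).mp hw
        have h0 := hsum w (by omega)
        have hset : {v | G.Adj w v ∧ distO v = R} =
            {u | G.Adj w u ∧ distO u = distO w + 1} := by
          ext u
          simp only [Set.mem_setOf_eq, hw']
          exact ⟨fun h => ⟨h.1, by omega⟩, fun h => ⟨h.1, by omega⟩⟩
        rw [hset, finsum_mem_eq_finite_toFinset_sum _ (hchildfin w)] at h0
        exact h0
      · refine Finset.sum_eq_zero fun v hv => ?_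
        exact hsupp v (by rw [(hmemS _ _).mp hv]; exact hr)
    | succ n ih =>
      intro r
      have happ : ∀ v : V, ((Δ ^ (n + 1)) φ : lp (fun _ : V => ℝ) 2) v =
          (Δ ((Δ ^ n) φ)) v := by
        intro v
        rw [pow_succ']
        rfl
      set f : lp (fun _ : V => ℝ) 2 := (Δ ^ n) φ with hf
      match r with
      | 0 =>
        have hO : sF 0 = {O} := by
          ext v
          simp only [hmemS, Finset.mem_singleton]
          constructor
          · intro hv
            have : G.dist O v = 0 := by rw [← hdist]; exact hv
            exact ((hconn.dist_eq_zero_iff).mp this).symm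
          · rintro rfl
            rw [hdist]; simp
        have hdO : distO O = 0 := by
          have : O ∈ sF 0 := by rw [hO]; exact Finset.mem_singleton_self O
          exact (hmemS _ _).mp this
        rw [hO, Finset.sum_singleton, happ, hΔ' f O, hnbr0 O hdO]
        have h1 := hkey 0 (fun v => f v)
        rw [hO, Finset.sum_singleton] at h1
        rw [← h1]
        exact ih 1
      | r + 1 =>
        calc ∑ v ∈ sF (r + 1), ((Δ ^ (n + 1)) φ : lp (fun _ : V => ℝ) 2) v
            = ∑ x ∈ sF (r + 1), (Δ f) x :=
              Finset.sum_congr rfl fun x _ => happ x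
          _ = ∑ x ∈ sF (r + 1), (f (par x) + ∑ u ∈ cF x, f u) := by
              refine Finset.sum_congr rfl fun x hx => ?_
              have hx' : distO x = r + 1 := (hmemS _ _).mp hx
              obtain ⟨hpnot, hins⟩ := hnbrS x (by omega)
              rw [hΔ' f x, hins, Finset.sum_insert hpnot]
          _ = (∑ x ∈ sF (r + 1), f (par x)) + ∑ x ∈ sF (r + 1), ∑ u ∈ cF x, f u :=
              Finset.sum_add_distrib
          _ = 0 := by
              rw [← hkey (r + 1) (fun v => f v), ih (r + 2),
                hkey r (fun x => f (par x))]
              have hstep : ∀ w ∈ sF r,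
                  (∑ x ∈ cF w, f (par x)) = (κ r : ℝ) * f w := by
                intro w hw
                have hw' : distO w = r := (hmemS _ _).mp hw
                have hconst : ∀ x ∈ cF w, f (par x) = f w := by
                  intro x hx
                  obtain ⟨haxw, hdx⟩ := (hmemC _ _).mp hx
                  rw [← hparu x (by omega) w haxw.symm (by omega)]
                rw [Finset.sum_congr rfl hconst, Finset.sum_const, hcardC w, hw',
                  nsmul_eq_mul]
              rw [Finset.sum_congr rfl hstep, ← Finset.mul_sum, ih r, mul_zero, add_zero]
  -- conclude: orthogonality to radial functions
  intro n g hg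
  set F : lp (fun _ : V => ℝ) 2 := (Δ ^ n) φ with hF
  have hinner : (inner ℝ F g : ℝ) = ∑' v : V, F v * g v := by
    rw [lp.inner_eq_tsum]
    simp [RCLike.inner_apply, mul_comm]
  rw [hinner]
  have hsummable : Summable (fun v : V => F v * g v) := by
    have := lp.summable_inner (𝕜 := ℝ) F g
    simpa [RCLike.inner_apply, mul_comm] using this
  -- group by distance
  let e : (Σ r : ℕ, {v : V // distO v = r}) ≃ V := Equiv.sigmaFiberEquiv distO
  have he : ∑' v : V, F v * g v
      = ∑' p : (Σ r : ℕ, {v : V // distO v = r}), F (e p) * g (e p) :=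
    (e.tsum_eq fun v => F v * g v).symm
  rw [he]
  have hfib : ∀ r : ℕ, Finite {v : V // distO v = r} := fun r => (hSfin r).to_subtype
  have hsig : Summable (fun p : (Σ r : ℕ, {v : V // distO v = r}) => F (e p) * g (e p)) :=
    (e.summable_iff (f := fun v => F v * g v)).mpr hsummable
  have hfibsum : ∀ r : ℕ,
      Summable (fun v : {v : V // distO v = r} =>
        F (e ⟨r, v⟩) * g (e ⟨r, v⟩)) := fun r => by
    haveI := hfib r
    exact Summable.of_finite
  rw [hsig.tsum_sigma' hfibsum]
  have hzero : ∀ r : ℕ, (∑' v : {v : V // distO v = r}, F v.1 * g v.1) = 0 := by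
    intro r
    haveI : Fintype {v : V // distO v = r} := (hSfin r).fintype
    rw [tsum_fintype]
    have heq : (∑ v : {v : V // distO v = r}, F v.1 * g v.1) = ∑ v ∈ sF r, F v * g v :=
      (Finset.sum_subtype (sF r) (fun v => hmemS r v) (fun v => F v * g v)).symm
    rw [heq]
    rcases Finset.eq_empty_or_nonempty (sF r) with h | ⟨v0, hv0⟩
    · rw [h, Finset.sum_empty]
    · have hcst : ∀ v ∈ sF r, F v * g v = F v * g v0 := fun v hv => by
        rw [hg v v0 (by rw [(hmemS _ _).mp hv, (hmemS _ _).mp hv0])]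
      rw [Finset.sum_congr rfl hcst, ← Finset.sum_mul, main n r, zero_mul]
  calc ∑' (r : ℕ), ∑' (v : {v : V // distO v = r}), F (e ⟨r, v⟩) * g (e ⟨r, v⟩)
      = ∑' (r : ℕ), (0 : ℝ) := tsum_congr fun r => by
        simpa [e, Equiv.sigmaFiberEquiv] using hzero r
    _ = 0 := tsum_zero
end
end

section
/- Let J₁ be a bounded Jacobi matrix and J₂ the once-stripped Jacobi matrix (first row and column deleted), with m-functions m₁, m₂ related by m₁(z) = 1/(b(1) − z − a(1)² m₂(z)). Then for Lebesgue-a.e. x ∈ ℝ, lim_{ε↓0} |m₁(x+iε)| = ∞ if and only if m₂(x+iε) → (b(1) − x)/a(1)² ∈ ℝ as ε↓0. Consequently, the sets {x : lim_{ε↓0}|m₁(x+iε)| = ∞} and {x : lim_{ε↓0}|m₂(x+iε)| = ∞} are disjoint; hence the singular parts of the spectral measures μ₁ and μ₂ are mutually singular whenever each singular part is supported on the set where its own m-function tends to ∞. -/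
open MeasureTheory Filter Topology Complex

noncomputable section


lemma aux_integrable (μ : Measure ℝ) [IsFiniteMeasure μ] (z : ℂ) (hz : 0 < z.im) :
    Integrable (fun x : ℝ => ((x : ℂ) - z)⁻¹) μ := by
  have hne : ∀ x : ℝ, (x : ℂ) - z ≠ 0 := by
    intro x h
    have : z = (x : ℂ) := by linear_combination -h
    rw [this] at hz; simp at hz
  have hcont : Continuous (fun x : ℝ => ((x : ℂ) - z)⁻¹) :=
    ((continuous_ofReal.sub continuous_const)).inv₀ hne
  refine Integrable.mono' (integrable_const (z.im)⁻¹) hcont.aestronglyMeasurable ?_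
  refine Filter.Eventually.of_forall fun x => ?_
  rw [norm_inv]
  have h1 : z.im ≤ ‖(x : ℂ) - z‖ := by
    have := Complex.abs_im_le_norm ((x : ℂ) - z)
    simp only [Complex.sub_im, Complex.ofReal_im, zero_sub, abs_neg] at this
    calc z.im ≤ |z.im| := le_abs_self _
    _ ≤ _ := this
  exact inv_anti₀ hz h1

lemma aux_im_nonneg (μ : Measure ℝ) [IsFiniteMeasure μ] (z : ℂ) (hz : 0 < z.im) :
    0 ≤ (∫ x : ℝ, ((x : ℂ) - z)⁻¹ ∂μ).im := by
  have h := integral_im (𝕜 := ℂ) (aux_integrable μ z hz)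
  simp only [RCLike.im_to_complex] at h
  rw [← h]
  refine integral_nonneg fun x => ?_
  rw [Complex.inv_im]
  simp only [Complex.sub_im, Complex.ofReal_im, zero_sub, neg_neg]
  exact div_nonneg hz.le (Complex.normSq_nonneg _)

/-- If the `m`-functions of a Jacobi matrix and of its
once-stripped matrix are related by `m₁(z) = 1/(b - z - a² m₂(z))`, then for
Lebesgue-a.e. `x`, `|m₁(x+iε)| → ∞` iff `m₂(x+iε) → (b - x)/a²`; the divergence
sets of `m₁` and `m₂` are disjoint; and consequently the singular parts of the
two spectral measures (each being supported on the divergence set of its own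
`m`-function) are mutually singular. -/
theorem stripped_m_functions_singular_parts_mutually_singular
    (a b : ℝ) (ha : 0 < a)
    (μ₁ μ₂ : Measure ℝ) [IsFiniteMeasure μ₁] [IsFiniteMeasure μ₂]
    (m₁ m₂ : ℂ → ℂ)
    (hm₁ : ∀ z : ℂ, 0 < z.im → m₁ z = ∫ x : ℝ, ((x : ℂ) - z)⁻¹ ∂μ₁)
    (hm₂ : ∀ z : ℂ, 0 < z.im → m₂ z = ∫ x : ℝ, ((x : ℂ) - z)⁻¹ ∂μ₂)
    (hrel : ∀ z : ℂ, 0 < z.im →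
      m₁ z = ((b : ℂ) - z - (a : ℂ) ^ 2 * m₂ z)⁻¹)
    -- the singular parts of `μ₁`, `μ₂`, supported on the divergence sets of
    -- their `m`-functions
    (ν₁ ν₂ : Measure ℝ)
    (hν₁ : ν₁ ≤ μ₁) (hν₂ : ν₂ ≤ μ₂)
    (hν₁supp : ν₁ {x : ℝ | ¬ Tendsto (fun ε : ℝ => ‖m₁ ((x : ℂ) + ε * I)‖)
      (𝓝[>] 0) atTop} = 0)
    (hν₂supp : ν₂ {x : ℝ | ¬ Tendsto (fun ε : ℝ => ‖m₂ ((x : ℂ) + ε * I)‖)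
      (𝓝[>] 0) atTop} = 0) :
    (∀ᵐ x : ℝ,
      (Tendsto (fun ε : ℝ => ‖m₁ ((x : ℂ) + ε * I)‖) (𝓝[>] 0) atTop ↔
        Tendsto (fun ε : ℝ => m₂ ((x : ℂ) + ε * I)) (𝓝[>] 0)
          (𝓝 (((b - x) / a ^ 2 : ℝ) : ℂ)))) ∧
    Disjoint
      {x : ℝ | Tendsto (fun ε : ℝ => ‖m₁ ((x : ℂ) + ε * I)‖) (𝓝[>] 0) atTop}
      {x : ℝ | Tendsto (fun ε : ℝ => ‖m₂ ((x : ℂ) + ε * I)‖) (𝓝[>] 0) atTop} ∧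
    ν₁ ⟂ₘ ν₂ := by
  have ha2 : ((a : ℂ) ^ 2) ≠ 0 := pow_ne_zero 2 (Complex.ofReal_ne_zero.mpr ha.ne')
  have him : ∀ w : ℂ, 0 < w.im → 0 ≤ (m₂ w).im := fun w hw => by
    rw [hm₂ w hw]; exact aux_im_nonneg μ₂ w hw
  have key : ∀ x : ℝ,
      Tendsto (fun ε : ℝ => ‖m₁ ((x : ℂ) + ε * I)‖) (𝓝[>] 0) atTop ↔
      Tendsto (fun ε : ℝ => m₂ ((x : ℂ) + ε * I)) (𝓝[>] 0)
        (𝓝 (((b - x) / a ^ 2 : ℝ) : ℂ)) := by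
    intro x
    set z : ℝ → ℂ := fun ε => (x : ℂ) + ε * I with hzdef
    have hzim : ∀ ε : ℝ, (z ε).im = ε := by intro ε; simp [hzdef]
    have hεpos : ∀ᶠ ε : ℝ in 𝓝[>] (0:ℝ), 0 < ε := eventually_mem_nhdsWithin
    set D : ℝ → ℂ := fun ε => (b : ℂ) - z ε - (a : ℂ) ^ 2 * m₂ (z ε) with hDdef
    have hDim : ∀ ε : ℝ, 0 < ε → (D ε).im < 0 := by
      intro ε hε
      have h2 := him (z ε) (by rw [hzim]; exact hε)
      have : (D ε).im = -ε - a ^ 2 * (m₂ (z ε)).im := by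
        simp [hDdef, hzim, Complex.sub_im, Complex.mul_im, ← Complex.ofReal_pow]
      rw [this]
      nlinarith [sq_nonneg a]
    have hDne : ∀ ε : ℝ, 0 < ε → D ε ≠ 0 := by
      intro ε hε h0
      have := hDim ε hε
      rw [h0] at this; simp at this
    have hm₁eq : ∀ ε : ℝ, 0 < ε → m₁ (z ε) = (D ε)⁻¹ := fun ε hε =>
      hrel (z ε) (by rw [hzim]; exact hε)
    have hztend : Tendsto z (𝓝[>] 0) (𝓝 (x : ℂ)) := by
      have hc : Continuous z := by
        exact continuous_const.add ((Complex.continuous_ofReal).mul continuous_const)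
      have h0 : Tendsto z (𝓝[>] (0:ℝ)) (𝓝 (z 0)) :=
        (hc.tendsto 0).mono_left nhdsWithin_le_nhds
      simpa [hzdef] using h0
    have hcast : (((b - x) / a ^ 2 : ℝ) : ℂ) = ((b : ℂ) - x) / (a : ℂ) ^ 2 := by
      push_cast; ring
    constructor
    · intro h
      have hD0 : Tendsto D (𝓝[>] 0) (𝓝 0) := by
        rw [tendsto_zero_iff_norm_tendsto_zero]
        refine h.inv_tendsto_atTop.congr' ?_
        filter_upwards [hεpos] with ε hε
        show ‖m₁ (z ε)‖⁻¹ = ‖D ε‖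
        rw [hm₁eq ε hε, norm_inv, inv_inv]
      have h2 : Tendsto (fun ε => ((b : ℂ) - z ε - D ε) / (a : ℂ) ^ 2) (𝓝[>] 0)
          (𝓝 (((b : ℂ) - x - 0) / (a : ℂ) ^ 2)) :=
        ((tendsto_const_nhds.sub hztend).sub hD0).div_const _
      have h3 : (fun ε => ((b : ℂ) - z ε - D ε) / (a : ℂ) ^ 2)
          = fun ε => m₂ (z ε) := by
        funext ε
        simp only [hDdef]; rw [div_eq_iff ha2]; ring
      rw [h3] at h2
      rw [hcast]
      simpa using h2
    · intro h
      have hD0 : Tendsto D (𝓝[>] 0) (𝓝 0) := by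
        have h2 : Tendsto D (𝓝[>] 0)
            (𝓝 ((b : ℂ) - x - (a : ℂ) ^ 2 * (((b - x) / a ^ 2 : ℝ) : ℂ))) :=
          (tendsto_const_nhds.sub hztend).sub (tendsto_const_nhds.mul h)
        have : (b : ℂ) - x - (a : ℂ) ^ 2 * (((b - x) / a ^ 2 : ℝ) : ℂ) = 0 := by
          rw [hcast]; field_simp; rw [div_self (Complex.ofReal_ne_zero.mpr ha.ne')]; ring
        rwa [this] at h2
      have hnorm : Tendsto (fun ε => ‖D ε‖) (𝓝[>] 0) (𝓝[>] 0) := by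
        rw [tendsto_nhdsWithin_iff]
        refine ⟨(tendsto_zero_iff_norm_tendsto_zero.mp hD0), ?_⟩
        filter_upwards [hεpos] with ε hε
        exact norm_pos_iff.mpr (hDne ε hε)
      have h4 : Tendsto (fun ε => ‖D ε‖⁻¹) (𝓝[>] 0) atTop :=
        tendsto_inv_nhdsGT_zero.comp hnorm
      refine h4.congr' ?_
      filter_upwards [hεpos] with ε hε
      show ‖D ε‖⁻¹ = ‖m₁ (z ε)‖
      rw [hm₁eq ε hε, norm_inv]
  have hdisj : Disjoint
      {x : ℝ | Tendsto (fun ε : ℝ => ‖m₁ ((x : ℂ) + ε * I)‖) (𝓝[>] 0) atTop}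
      {x : ℝ | Tendsto (fun ε : ℝ => ‖m₂ ((x : ℂ) + ε * I)‖) (𝓝[>] 0) atTop} := by
    rw [Set.disjoint_left]
    intro x hx₁ hx₂
    have h2 := ((key x).mp hx₁).norm
    exact (h2.not_tendsto (disjoint_nhds_atTop _)) hx₂
  refine ⟨ae_of_all _ key, hdisj, ?_⟩
  refine ⟨toMeasurable ν₁ {x : ℝ | ¬ Tendsto (fun ε : ℝ => ‖m₁ ((x : ℂ) + ε * I)‖)
      (𝓝[>] 0) atTop}, measurableSet_toMeasurable _ _, ?_, ?_⟩
  · rw [measure_toMeasurable]; exact hν₁supp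
  · refine measure_mono_null ?_ hν₂supp
    intro x hx
    simp only [Set.mem_compl_iff] at hx
    have hx1 : x ∈ {x : ℝ | Tendsto (fun ε : ℝ => ‖m₁ ((x : ℂ) + ε * I)‖)
        (𝓝[>] 0) atTop} := by
      by_contra h
      exact hx (subset_toMeasurable _ _ h)
    exact Set.disjoint_left.mp hdisj hx1

end
end
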